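/- (Heath-Brown, conditional form) Let δ > 0 and A > 0, and suppose that M₂(x, h) ≤ A h x log x for all x ≥ 2 and all h with 1 ≤ h ≤ x^{1/2 + δ}. Then there is a constant C, depending only on A and δ, such that for all x ≥ 2 and all H ≥ 1, N(x, H) ≤ C (x/H²) log x and S(x, H) ≤ C (x/H) log x. -/

import Mathlib

open scoped Classical

/-- The n-th prime (0-indexed: `nthPrime 0 = 2`). -/
noncomputable def nthPrime (n : ℕ) : ℕ := Nat.nth Nat.Prime n

/-- The indices n with p_{n+1} ≤ x and p_{n+1} - p_n ≥ H. -/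
noncomputable def gapSet (x H : ℝ) : Finset ℕ :=
  (Finset.range ⌈x⌉₊).filter fun n =>
    (nthPrime (n + 1) : ℝ) ≤ x ∧ H ≤ (nthPrime (n + 1) : ℝ) - nthPrime n

/-- N(x, H): the number of consecutive prime pairs p_n < p_{n+1} ≤ x with gap ≥ H. -/
noncomputable def Ngap (x H : ℝ) : ℝ := ((gapSet x H).card : ℝ)

/-- S(x, H): the sum of gaps p_{n+1} - p_n over pairs with p_{n+1} ≤ x and gap ≥ H. -/
noncomputable def Sgap (x H : ℝ) : ℝ :=
  ∑ n ∈ gapSet x H, ((nthPrime (n + 1) : ℝ) - nthPrime n)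

/-- The Chebyshev theta function θ(t) = Σ_{p ≤ t} log p. -/
noncomputable def chebTheta (t : ℝ) : ℝ :=
  ∑ p ∈ (Finset.range (⌊t⌋₊ + 1)).filter Nat.Prime, Real.log p

/-- The second moment M₂(x, h) = ∫₁ˣ (θ(y+h) - θ(y) - h)² dy. -/
noncomputable def M2 (x h : ℝ) : ℝ :=
  ∫ y in (1:ℝ)..x, (chebTheta (y + h) - chebTheta y - h) ^ 2

open MeasureTheory

lemma nthPrime_prime (n : ℕ) : (nthPrime n).Prime := Nat.prime_nth_prime n

lemma nthPrime_strictMono : StrictMono nthPrime := Nat.nth_strictMono Nat.infinite_setOf_prime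

lemma nthPrime_zero : nthPrime 0 = 2 := by
  have h2 : Nat.count Nat.Prime 2 = 0 := by norm_num [Nat.count_succ]
  have := Nat.nth_count (p := Nat.Prime) (n := 2) (by norm_num)
  rw [h2] at this
  exact this

lemma nthPrime_one : nthPrime 1 = 3 := by
  have h3 : Nat.count Nat.Prime 3 = 1 := by norm_num [Nat.count_succ]
  have := Nat.nth_count (p := Nat.Prime) (n := 3) (by norm_num)
  rw [h3] at this
  exact this

lemma two_le_nthPrime (n : ℕ) : 2 ≤ nthPrime n := (nthPrime_prime n).two_le

lemma le_nthPrime (n : ℕ) : n ≤ nthPrime n := nthPrime_strictMono.le_apply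

/-- If q is a prime exceeding the n-th prime, it is at least the (n+1)-st prime. -/
lemma nthPrime_succ_le {q n : ℕ} (hq : q.Prime) (h : nthPrime n < q) : nthPrime (n + 1) ≤ q := by
  have hqe : nthPrime (Nat.count Nat.Prime q) = q := Nat.nth_count hq
  have hlt : n < Nat.count Nat.Prime q := by
    by_contra hc
    push_neg at hc
    have := nthPrime_strictMono.monotone hc
    rw [hqe] at this
    omega
  have := nthPrime_strictMono.monotone hlt
  rw [hqe] at this
  exact this

/-- For n ≠ 0 the prime gap is at least 2. -/
lemma nthPrime_gap_two {n : ℕ} (hn : n ≠ 0) : nthPrime n + 2 ≤ nthPrime (n + 1) := by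
  have hlt : nthPrime n < nthPrime (n + 1) := nthPrime_strictMono (Nat.lt_succ_self n)
  rcases Nat.even_or_odd (nthPrime n) with he | ho
  · exfalso
    have h2 : nthPrime n = 2 := ((nthPrime_prime n).even_iff).1 he
    have h0 : nthPrime n = nthPrime 0 := by rw [h2, nthPrime_zero]
    exact hn (nthPrime_strictMono.injective h0)
  · by_contra hc
    push_neg at hc
    have heq : nthPrime (n + 1) = nthPrime n + 1 := by omega
    have hev : Even (nthPrime (n + 1)) := by rw [heq]; exact Odd.add_one ho
    have h2 : nthPrime (n + 1) = 2 := ((nthPrime_prime (n + 1)).even_iff).1 hev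
    have := two_le_nthPrime n
    omega

lemma mem_gapSet {x H : ℝ} {n : ℕ} :
    n ∈ gapSet x H ↔ n < ⌈x⌉₊ ∧ (nthPrime (n + 1) : ℝ) ≤ x ∧
      H ≤ (nthPrime (n + 1) : ℝ) - nthPrime n := by
  simp [gapSet, and_assoc]

lemma chebTheta_nonneg (t : ℝ) : 0 ≤ chebTheta t :=
  Finset.sum_nonneg fun p _ => Real.log_natCast_nonneg p

lemma chebTheta_mono : Monotone chebTheta := by
  intro a b hab
  apply Finset.sum_le_sum_of_subset_of_nonneg
  · apply Finset.filter_subset_filter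
    apply Finset.range_subset_range.2
    have := Nat.floor_mono hab
    omega
  · intro p _ _
    exact Real.log_natCast_nonneg p

/-- If there is no prime in (a, b], then θ(b) = θ(a). -/
lemma chebTheta_congr {a b : ℝ} (h0 : 0 ≤ a) (hab : a ≤ b)
    (hnp : ∀ q : ℕ, q.Prime → a < q → ¬((q : ℝ) ≤ b)) : chebTheta b = chebTheta a := by
  unfold chebTheta
  congr 1
  apply Finset.ext
  intro q
  simp only [Finset.mem_filter, Finset.mem_range]
  constructor
  · rintro ⟨hqb, hq⟩
    refine ⟨?_, hq⟩
    have hqb' : (q : ℝ) ≤ b := (Nat.le_floor_iff (le_trans h0 hab)).1 (by omega)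
    have hqa : (q : ℝ) ≤ a := by
      by_contra hc
      push_neg at hc
      exact hnp q hq hc hqb'
    have := Nat.le_floor hqa
    omega
  · rintro ⟨hqa, hq⟩
    have := Nat.floor_mono hab
    exact ⟨by omega, hq⟩

/-- The key second-moment lower bound: each gap ≥ H ≥ 2h contributes (gap − h)·h² to M₂(x,h). -/
lemma sum_gap_le_M2 {x H h : ℝ} (hx : 2 ≤ x) (hh : 0 < h) (hHh : 2 * h ≤ H) :
    h ^ 2 * ∑ n ∈ gapSet x H, ((nthPrime (n + 1) : ℝ) - nthPrime n - h) ≤ M2 x h := by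
  set f : ℝ → ℝ := fun y => (chebTheta (y + h) - chebTheta y - h) ^ 2 with hf
  set T := gapSet x H with hT
  set s : ℕ → Set ℝ := fun n => Set.Ico ((nthPrime n : ℝ)) ((nthPrime (n + 1) : ℝ) - h) with hs
  have hx1 : (1 : ℝ) ≤ x := by linarith
  have hmem : ∀ n ∈ T, (nthPrime (n + 1) : ℝ) ≤ x ∧
      H ≤ (nthPrime (n + 1) : ℝ) - nthPrime n := fun n hn => (mem_gapSet.1 hn).2
  have hcast : ∀ n : ℕ, (2 : ℝ) ≤ (nthPrime n : ℝ) := fun n => by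
    exact_mod_cast two_le_nthPrime n
  have hsub : ∀ n ∈ T, s n ⊆ Set.Ioc 1 x := by
    intro n hn y hy
    obtain ⟨hle, _⟩ := hmem n hn
    have h2 := hcast n
    exact ⟨by have := hy.1; linarith, by have := hy.2; linarith⟩
  have hfmeas : Measurable f := by
    have h1 : Measurable fun y : ℝ => chebTheta (y + h) :=
      chebTheta_mono.measurable.comp (measurable_id.add_const h)
    exact ((h1.sub chebTheta_mono.measurable).sub measurable_const).pow_const 2
  have hCb : ∀ y ∈ Set.Ioc (1 : ℝ) x, |f y| ≤ (chebTheta (x + h) + h) ^ 2 := by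
    intro y hy
    have h1 : chebTheta y ≤ chebTheta (y + h) := chebTheta_mono (by linarith)
    have h2 : chebTheta (y + h) ≤ chebTheta (x + h) := chebTheta_mono (by linarith [hy.2])
    have h3 : 0 ≤ chebTheta y := chebTheta_nonneg y
    have habs : |chebTheta (y + h) - chebTheta y - h| ≤ chebTheta (x + h) + h := by
      rw [abs_le]
      constructor <;> nlinarith [chebTheta_nonneg (x + h)]
    calc |f y| = |chebTheta (y + h) - chebTheta y - h| ^ 2 := by
          rw [hf]; rw [abs_of_nonneg (sq_nonneg _), sq_abs]
      _ ≤ (chebTheta (x + h) + h) ^ 2 := by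
          apply pow_le_pow_left₀ (abs_nonneg _) habs
  have hInt : IntegrableOn f (Set.Ioc 1 x) := by
    have hfin : IsFiniteMeasure (volume.restrict (Set.Ioc (1 : ℝ) x)) :=
      ⟨by rw [Measure.restrict_apply_univ]; exact measure_Ioc_lt_top⟩
    apply Integrable.mono' (integrable_const ((chebTheta (x + h) + h) ^ 2))
      hfmeas.aestronglyMeasurable.restrict
    exact (ae_restrict_iff' measurableSet_Ioc).2 (Filter.Eventually.of_forall hCb)
  have hdisj : Set.Pairwise ↑T (Function.onFun Disjoint s) := by
    have key : ∀ m n : ℕ, m < n → Disjoint (s m) (s n) := by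
      intro m n hmn
      apply Set.disjoint_left.2
      intro y hym hyn
      have h1 : y < (nthPrime (m + 1) : ℝ) - h := hym.2
      have h2 : (nthPrime n : ℝ) ≤ y := hyn.1
      have h3 : nthPrime (m + 1) ≤ nthPrime n := nthPrime_strictMono.monotone hmn
      have h4 : (nthPrime (m + 1) : ℝ) ≤ nthPrime n := by exact_mod_cast h3
      linarith
    intro m _ n _ hmn
    rcases lt_or_gt_of_ne hmn with hl | hl
    · exact key m n hl
    · exact (key n m hl).symm
  have heq : ∀ n ∈ T, Set.EqOn f (fun _ => h ^ 2) (s n) := by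
    intro n hn y hy
    have hy1 : (nthPrime n : ℝ) ≤ y := hy.1
    have hy2 : y < (nthPrime (n + 1) : ℝ) - h := hy.2
    have h2n := hcast n
    have hth : chebTheta (y + h) = chebTheta y := by
      apply chebTheta_congr (by linarith) (by linarith)
      intro q hq hyq hqyh
      have hq1 : (nthPrime n : ℝ) < q := lt_of_le_of_lt hy1 hyq
      have hq2 : nthPrime n < q := by exact_mod_cast hq1
      have hq3 := nthPrime_succ_le hq hq2
      have hq4 : (nthPrime (n + 1) : ℝ) ≤ q := by exact_mod_cast hq3
      linarith
    show (chebTheta (y + h) - chebTheta y - h) ^ 2 = h ^ 2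
    rw [hth, sub_self, zero_sub, neg_sq]
  have hlen : ∀ n ∈ T, ∫ y in s n, f y = h ^ 2 * ((nthPrime (n + 1) : ℝ) - nthPrime n - h) := by
    intro n hn
    rw [setIntegral_congr_fun measurableSet_Ico (heq n hn), setIntegral_const,
      measureReal_def, Real.volume_Ico, smul_eq_mul]
    have hgap : H ≤ (nthPrime (n + 1) : ℝ) - nthPrime n := (hmem n hn).2
    rw [ENNReal.toReal_ofReal (by linarith)]
    ring
  have hM2 : M2 x h = ∫ y in Set.Ioc 1 x, f y := intervalIntegral.integral_of_le hx1
  calc h ^ 2 * ∑ n ∈ T, ((nthPrime (n + 1) : ℝ) - nthPrime n - h)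
      = ∑ n ∈ T, ∫ y in s n, f y := by
        rw [Finset.mul_sum]
        exact Finset.sum_congr rfl fun n hn => (hlen n hn).symm
    _ = ∫ y in ⋃ n ∈ T, s n, f y :=
        (integral_biUnion_finset T (fun n _ => measurableSet_Ico) hdisj
          (fun n hn => hInt.mono_set (hsub n hn))).symm
    _ ≤ ∫ y in Set.Ioc 1 x, f y := by
        apply setIntegral_mono_set hInt
        · exact (ae_restrict_iff' measurableSet_Ioc).2
            (Filter.Eventually.of_forall fun y _ => sq_nonneg _)
        · exact Filter.Eventually.of_forall fun y hy => (Set.iUnion₂_subset hsub) hy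
    _ = M2 x h := hM2.symm

set_option maxHeartbeats 1000000 in
/-- (Heath-Brown, conditional form) If M₂(x, h) ≤ A h x log x for 1 ≤ h ≤ x^{1/2+δ},
then N(x, H) ≪ (x/H²) log x and S(x, H) ≪ (x/H) log x. -/
theorem heathBrown_gap_bounds (δ A : ℝ) (hδ : 0 < δ) (hA : 0 < A)
    (hM : ∀ x h : ℝ, 2 ≤ x → 1 ≤ h → h ≤ x ^ ((1 : ℝ) / 2 + δ) →
      M2 x h ≤ A * h * x * Real.log x) :
    ∃ C : ℝ, ∀ x H : ℝ, 2 ≤ x → 1 ≤ H →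
      Ngap x H ≤ C * (x / H ^ 2) * Real.log x ∧
      Sgap x H ≤ C * (x / H) * Real.log x := by
  obtain ⟨K, hKdef⟩ : ∃ K : ℝ, K = 2 + A / δ := ⟨_, rfl⟩
  have hK2 : 2 ≤ K := by
    have h := div_pos hA hδ
    rw [hKdef]; linarith
  have hK0 : 0 < K := by linarith
  obtain ⟨C1, hC1def⟩ : ∃ C1 : ℝ, C1 = 4 * A * K := ⟨_, rfl⟩
  have hC10 : 0 < C1 := by rw [hC1def]; positivity
  refine ⟨C1 + 4, ?_⟩
  intro x H hx hH
  have hx0 : (0 : ℝ) < x := by linarith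
  have hlog2 : (0.6931471803 : ℝ) < Real.log 2 := Real.log_two_gt_d9
  have hlog : (1 : ℝ) / 2 ≤ Real.log x := by
    have := Real.log_le_log (by norm_num) hx
    linarith
  have hlogpos : 0 < Real.log x := by linarith
  have hxlog1 : 1 ≤ x * Real.log x := by nlinarith
  obtain ⟨c, hcdef⟩ : ∃ c : ℝ, c = x ^ ((1 : ℝ) / 2 + δ) := ⟨_, rfl⟩
  have hc1 : 1 ≤ c := by
    rw [hcdef]
    calc (1 : ℝ) = x ^ (0 : ℝ) := (Real.rpow_zero x).symm
      _ ≤ x ^ ((1 : ℝ) / 2 + δ) :=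
        Real.rpow_le_rpow_of_exponent_le (by linarith) (by linarith)
  have hc0 : 0 < c := lt_of_lt_of_le one_pos hc1
  have hlogb : 2 * δ * Real.log x ≤ x ^ (2 * δ) := by
    have h1 : Real.log (x ^ (2 * δ)) ≤ x ^ (2 * δ) - 1 :=
      Real.log_le_sub_one_of_pos (Real.rpow_pos_of_pos hx0 _)
    rw [Real.log_rpow hx0] at h1
    linarith
  have hcc : c * c = x * x ^ (2 * δ) := by
    rw [hcdef, ← Real.rpow_add hx0,
      show ((1 : ℝ) / 2 + δ) + ((1 : ℝ) / 2 + δ) = 1 + 2 * δ by ring,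
      Real.rpow_add hx0, Real.rpow_one]
  -- every gap below x is at most K·c
  have hgapb : ∀ n : ℕ, (nthPrime (n + 1) : ℝ) ≤ x →
      (nthPrime (n + 1) : ℝ) - nthPrime n ≤ K * c := by
    intro n hnx
    by_cases hbig : 2 * c ≤ (nthPrime (n + 1) : ℝ) - nthPrime n
    · have hmemn : n ∈ gapSet x (2 * c) := by
        have hn2 : ((n : ℝ) + 1) ≤ (nthPrime (n + 1) : ℝ) := by
          exact_mod_cast le_nthPrime (n + 1)
        have hnxlt : (n : ℝ) < x := by linarith
        exact mem_gapSet.2 ⟨Nat.lt_ceil.2 hnxlt, hnx, hbig⟩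
      have hkey := sum_gap_le_M2 (H := 2 * c) hx hc0 (le_refl _)
      have hM2le := hM x c hx hc1 hcdef.le
      have hterm : (nthPrime (n + 1) : ℝ) - nthPrime n - c ≤
          ∑ m ∈ gapSet x (2 * c), ((nthPrime (m + 1) : ℝ) - nthPrime m - c) := by
        apply Finset.single_le_sum (fun m hm => ?_) hmemn
        have := (mem_gapSet.1 hm).2.2
        linarith
      -- c^2 * (gap - c) ≤ A * c * x * log x  and  x * log x ≤ c*c/(2δ)
      have hxlc : 2 * δ * (x * Real.log x) ≤ c * c := by nlinarith
      have h1 : c ^ 2 * ((nthPrime (n + 1) : ℝ) - nthPrime n - c) ≤ A * c * (x * Real.log x) :=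
        le_trans (mul_le_mul_of_nonneg_left hterm (sq_nonneg c))
          (le_trans hkey (le_of_eq_of_le rfl (by linarith [hM2le])))
      have h2 : A * c * (2 * δ * (x * Real.log x)) ≤ A * c * (c * c) :=
        mul_le_mul_of_nonneg_left hxlc (by positivity)
      have h3 : 2 * δ * (c ^ 2 * ((nthPrime (n + 1) : ℝ) - nthPrime n - c)) ≤ A * c * (c * c) := by
        nlinarith [h1]
      apply le_of_mul_le_mul_left _ (show (0:ℝ) < 2 * δ * c ^ 2 by positivity)
      have hKc : 2 * δ * c ^ 2 * (K * c) = 4 * δ * c ^ 3 + 2 * A * c ^ 3 := by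
        rw [hKdef]; field_simp; ring
      rw [hKc]
      nlinarith [h3, mul_pos hδ (pow_pos hc0 3), mul_pos hA (pow_pos hc0 3)]
    · push_neg at hbig
      have h2K : 2 * c ≤ K * c := mul_le_mul_of_nonneg_right hK2 hc0.le
      linarith
  -- main bound for thresholds H' ≥ 2
  have main : ∀ H' : ℝ, 2 ≤ H' →
      Sgap x H' ≤ C1 * (x / H') * Real.log x ∧
      Ngap x H' ≤ C1 * (x / H' ^ 2) * Real.log x := by
    intro H' hH'
    have hH'0 : (0 : ℝ) < H' := by linarith
    have hSnn : 0 ≤ Sgap x H' := by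
      apply Finset.sum_nonneg
      intro n hn
      have := (mem_gapSet.1 hn).2.2
      linarith
    rcases Finset.eq_empty_or_nonempty (gapSet x H') with he | ⟨n, hn⟩
    · have hS0 : Sgap x H' = 0 := by rw [Sgap, he, Finset.sum_empty]
      have hN0 : Ngap x H' = 0 := by rw [Ngap, he]; simp
      constructor
      · rw [hS0]; positivity
      · rw [hN0]; positivity
    · obtain ⟨h, hhdef⟩ : ∃ h : ℝ, h = min (H' / 2) c := ⟨_, rfl⟩
      have hh1 : 1 ≤ h := by rw [hhdef]; exact le_min (by linarith) hc1
      have hh0 : 0 < h := by linarith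
      have hhH : h ≤ H' / 2 := by rw [hhdef]; exact min_le_left _ _
      have hhc : h ≤ c := by rw [hhdef]; exact min_le_right _ _
      have hkey := sum_gap_le_M2 (H := H') hx hh0 (by linarith)
      have hM2le := hM x h hx hh1 (hhc.trans hcdef.le)
      have hsum : Sgap x H' / 2 ≤
          ∑ m ∈ gapSet x H', ((nthPrime (m + 1) : ℝ) - nthPrime m - h) := by
        rw [Sgap, Finset.sum_div]
        apply Finset.sum_le_sum
        intro m hm
        have := (mem_gapSet.1 hm).2.2
        linarith
      have hS : h * Sgap x H' ≤ 2 * A * x * Real.log x := by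
        have h1 : h ^ 2 * (Sgap x H' / 2) ≤ A * h * x * Real.log x := by
          calc h ^ 2 * (Sgap x H' / 2) ≤ h ^ 2 * ∑ m ∈ gapSet x H',
              ((nthPrime (m + 1) : ℝ) - nthPrime m - h) :=
                mul_le_mul_of_nonneg_left hsum (sq_nonneg h)
            _ ≤ M2 x h := hkey
            _ ≤ A * h * x * Real.log x := hM2le
        apply le_of_mul_le_mul_right _ hh0
        nlinarith [h1]
      -- H' ≤ 2 K h
      obtain ⟨hnlt, hnx, hgap⟩ := mem_gapSet.1 hn
      have hgK : (nthPrime (n + 1) : ℝ) - nthPrime n ≤ K * c := hgapb n hnx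
      have hHKc : H' ≤ K * c := le_trans hgap hgK
      have hHle : H' ≤ 2 * K * h := by
        rcases le_total (H' / 2) c with hle | hle
        · have heq : h = H' / 2 := by rw [hhdef]; exact min_eq_left hle
          rw [heq]; nlinarith
        · have heq : h = c := by rw [hhdef]; exact min_eq_right hle
          rw [heq]; nlinarith
      have hSf : H' * Sgap x H' ≤ C1 * (x * Real.log x) := by
        calc H' * Sgap x H' ≤ (2 * K * h) * Sgap x H' :=
              mul_le_mul_of_nonneg_right hHle hSnn
          _ = 2 * K * (h * Sgap x H') := by ring
          _ ≤ 2 * K * (2 * A * x * Real.log x) := by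
              apply mul_le_mul_of_nonneg_left hS (by positivity)
          _ = C1 * (x * Real.log x) := by rw [hC1def]; ring
      have hNS : Ngap x H' * H' ≤ Sgap x H' := by
        rw [Ngap, Sgap]
        calc ((gapSet x H').card : ℝ) * H' = ∑ _m ∈ gapSet x H', H' := by
              rw [Finset.sum_const, nsmul_eq_mul]
          _ ≤ _ := Finset.sum_le_sum fun m hm => (mem_gapSet.1 hm).2.2
      constructor
      · rw [show C1 * (x / H') * Real.log x = C1 * (x * Real.log x) / H' by ring]
        rw [le_div_iff₀ hH'0]
        linarith
      · rw [show C1 * (x / H' ^ 2) * Real.log x = C1 * (x * Real.log x) / H' ^ 2 by ring]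
        rw [le_div_iff₀ (by positivity)]
        have hNnn : 0 ≤ Ngap x H' := Nat.cast_nonneg _
        calc Ngap x H' * H' ^ 2 = (Ngap x H' * H') * H' := by ring
          _ ≤ Sgap x H' * H' := mul_le_mul_of_nonneg_right hNS (le_of_lt hH'0)
          _ = H' * Sgap x H' := by ring
          _ ≤ C1 * (x * Real.log x) := hSf
  rcases le_total 2 H with h2H | h2H
  · obtain ⟨hS, hN⟩ := main H h2H
    have hHpos : (0 : ℝ) < H := by linarith
    constructor
    · calc Ngap x H ≤ C1 * (x / H ^ 2) * Real.log x := hN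
        _ ≤ (C1 + 4) * (x / H ^ 2) * Real.log x := by
            apply mul_le_mul_of_nonneg_right _ (le_of_lt hlogpos)
            apply mul_le_mul_of_nonneg_right (by linarith) (by positivity)
    · calc Sgap x H ≤ C1 * (x / H) * Real.log x := hS
        _ ≤ (C1 + 4) * (x / H) * Real.log x := by
            apply mul_le_mul_of_nonneg_right _ (le_of_lt hlogpos)
            apply mul_le_mul_of_nonneg_right (by linarith) (by positivity)
  · -- 1 ≤ H ≤ 2
    obtain ⟨hS2, hN2⟩ := main 2 (le_refl _)
    have hHpos : (0 : ℝ) < H := by linarith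
    have hsub2 : gapSet x H ⊆ insert 0 (gapSet x 2) := by
      intro n hn
      obtain ⟨h1, h2, h3⟩ := mem_gapSet.1 hn
      by_cases h4 : (2 : ℝ) ≤ (nthPrime (n + 1) : ℝ) - nthPrime n
      · exact Finset.mem_insert_of_mem (mem_gapSet.2 ⟨h1, h2, h4⟩)
      · push_neg at h4
        have hlt : (nthPrime (n + 1) : ℝ) < (nthPrime n : ℝ) + 2 := by linarith
        have hltn : nthPrime (n + 1) < nthPrime n + 2 := by exact_mod_cast hlt
        have hn0 : n = 0 := by
          by_contra hne
          have := nthPrime_gap_two hne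
          omega
        rw [hn0]
        exact Finset.mem_insert_self 0 _
    have h0notin : 0 ∉ gapSet x 2 := by
      intro h0
      have := (mem_gapSet.1 h0).2.2
      rw [nthPrime_zero, nthPrime_one] at this
      norm_num at this
    -- N bound
    have hNcard : Ngap x H ≤ 1 + Ngap x 2 := by
      rw [Ngap, Ngap]
      have hcard := Finset.card_le_card hsub2
      have := Finset.card_insert_le 0 (gapSet x 2)
      have hle : (gapSet x H).card ≤ (gapSet x 2).card + 1 := le_trans hcard this
      exact_mod_cast by exact_mod_cast le_trans (Nat.cast_le.2 hle) (by push_cast; linarith)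
    have hSsum : Sgap x H ≤ 1 + Sgap x 2 := by
      rw [Sgap]
      calc ∑ n ∈ gapSet x H, ((nthPrime (n + 1) : ℝ) - nthPrime n)
          ≤ ∑ n ∈ insert 0 (gapSet x 2), ((nthPrime (n + 1) : ℝ) - nthPrime n) := by
            apply Finset.sum_le_sum_of_subset_of_nonneg hsub2
            intro m _ _
            have : (nthPrime m : ℝ) < nthPrime (m + 1) := by
              exact_mod_cast nthPrime_strictMono (Nat.lt_succ_self m)
            linarith
        _ = ((nthPrime 1 : ℝ) - nthPrime 0) + Sgap x 2 := by
            rw [Finset.sum_insert h0notin, Sgap]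
        _ = 1 + Sgap x 2 := by rw [nthPrime_zero, nthPrime_one]; norm_num
    have hH2 : H ^ 2 ≤ 4 := by nlinarith
    have hHdiv : x / 4 ≤ x / H ^ 2 := by
      apply div_le_div_of_nonneg_left (le_of_lt hx0) (by positivity) hH2
    have hHdiv' : x / 2 ≤ x / H := by
      apply div_le_div_of_nonneg_left (le_of_lt hx0) hHpos h2H
    constructor
    · have e1 : C1 * (x / 2 ^ 2) * Real.log x ≤ C1 * (x / H ^ 2) * Real.log x := by
        apply mul_le_mul_of_nonneg_right _ (le_of_lt hlogpos)
        apply mul_le_mul_of_nonneg_left (by norm_num at hHdiv ⊢; linarith) (le_of_lt hC10)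
      have e2 : (1 : ℝ) ≤ 4 * (x / H ^ 2) * Real.log x := by
        have : x / 4 * Real.log x ≤ x / H ^ 2 * Real.log x :=
          mul_le_mul_of_nonneg_right hHdiv (le_of_lt hlogpos)
        nlinarith
      calc Ngap x H ≤ 1 + Ngap x 2 := hNcard
        _ ≤ 1 + C1 * (x / 2 ^ 2) * Real.log x := by linarith
        _ ≤ (C1 + 4) * (x / H ^ 2) * Real.log x := by nlinarith
    · have e1 : C1 * (x / 2) * Real.log x ≤ C1 * (x / H) * Real.log x := by
        apply mul_le_mul_of_nonneg_right _ (le_of_lt hlogpos)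
        apply mul_le_mul_of_nonneg_left hHdiv' (le_of_lt hC10)
      have e2 : (1 : ℝ) ≤ 4 * (x / H) * Real.log x := by
        have : x / 2 * Real.log x ≤ x / H * Real.log x :=
          mul_le_mul_of_nonneg_right hHdiv' (le_of_lt hlogpos)
        nlinarith
      calc Sgap x H ≤ 1 + Sgap x 2 := hSsum
        _ ≤ 1 + C1 * (x / 2) * Real.log x := by linarith
        _ ≤ (C1 + 4) * (x / H) * Real.log x := by nlinarith
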